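/- arXiv:1108.0133 — 2 statements merged into one kernel-verified Lean document; each statement's English description precedes it below -/
import Mathlib

section
/- Hitting times on weighted trees: let T be a finite tree with positive edge conductances and let v be any vertex. Then for every subset A of vertices, max_x E_x[τ_A] ≤ t_v·(1 + 1/π(A)), where t_v = max_x E_x[τ_v] and π is the stationary distribution of the random walk. -/
open scoped BigOperators

/-- Minimum principle: if `u` is nonnegative on a nonempty set `B` and
super-mean-value (`P u ≤ u`) off `B`, then `u ≥ 0` everywhere, for a connected
weighted graph. -/
lemma claim_tree_hit_minprin {S : Type*} [Fintype S] [DecidableEq S]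
    (G : SimpleGraph S) (hconn : G.Connected)
    (c : S → S → ℝ) (hc0 : ∀ x y, 0 ≤ c x y)
    (hadjpos : ∀ x y, G.Adj x y → 0 < c x y)
    (hK : ∀ x, 0 < ∑ z, c x z)
    (B : Finset S) (hB : B.Nonempty)
    (u : S → ℝ) (hBu : ∀ x ∈ B, 0 ≤ u x)
    (hrec : ∀ x ∉ B, ∑ y, (c x y / ∑ z, c x z) * u y ≤ u x) :
    ∀ x, 0 ≤ u x := by
  obtain ⟨b, hbB⟩ := hB
  obtain ⟨x0, -, hx0⟩ := Finset.exists_min_image Finset.univ u ⟨b, Finset.mem_univ b⟩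
  have hx0' : ∀ y, u x0 ≤ u y := fun y => hx0 y (Finset.mem_univ y)
  by_contra hcon
  push_neg at hcon
  obtain ⟨w, hw⟩ := hcon
  have hm : u x0 < 0 := lt_of_le_of_lt (hx0' w) hw
  -- the minimum propagates to neighbours
  have step : ∀ x, u x = u x0 → ∀ y, G.Adj x y → u y = u x0 := by
    intro x hxm y hxy
    have hxB : x ∉ B := by
      intro hmem
      have := hBu x hmem
      rw [hxm] at this
      linarith
    have h1 := hrec x hxB
    have rowsum : ∑ y, c x y / (∑ z, c x z) = 1 := by
      rw [← Finset.sum_div, div_self (hK x).ne']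
    have hsum : ∑ y, (c x y / ∑ z, c x z) * (u y - u x0)
        = (∑ y, (c x y / ∑ z, c x z) * u y) - u x0 := by
      simp only [mul_sub]
      rw [Finset.sum_sub_distrib, ← Finset.sum_mul, rowsum, one_mul]
    have key : ∑ y, (c x y / ∑ z, c x z) * (u y - u x0) ≤ 0 := by
      rw [hsum, hxm] at *
      linarith
    have nonneg : ∀ y ∈ Finset.univ, (0:ℝ) ≤ (c x y / ∑ z, c x z) * (u y - u x0) :=
      fun y _ => mul_nonneg (div_nonneg (hc0 x y) (hK x).le) (sub_nonneg.2 (hx0' y))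
    have hzero : (c x y / ∑ z, c x z) * (u y - u x0) = 0 :=
      (Finset.sum_eq_zero_iff_of_nonneg nonneg).1
        (le_antisymm key (Finset.sum_nonneg nonneg)) y (Finset.mem_univ y)
    have hcpos : 0 < c x y / ∑ z, c x z := div_pos (hadjpos x y hxy) (hK x)
    rcases mul_eq_zero.1 hzero with h' | h'
    · exact absurd h' hcpos.ne'
    · linarith [sub_eq_zero.1 h']
  have walkprop : ∀ {x y : S} (_ : G.Walk x y), u x = u x0 → u y = u x0 := by
    intro x y p
    induction p with
    | nil => exact id
    | cons h' p ih => exact fun hx => ih (step _ hx _ h')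
  obtain ⟨p⟩ := hconn.preconnected x0 b
  have hub : u b = u x0 := walkprop p rfl
  have := hBu b hbB
  rw [hub] at this
  linarith

/-- hitting times on weighted trees.  For the random walk on a finite
tree with positive edge conductances `c` (moving to a neighbour with probability
proportional to the conductance, stationary measure proportional to the total
conductance at a vertex), for every vertex `v` and every subset `A` of vertices,
`max_x E_x[τ_A] ≤ t_v (1 + 1/π(A))`, where `t_v = max_x E_x[τ_v]`.  Expected hitting
times are characterized by the usual hitting-time equations. -/
theorem claim_tree_hit {S : Type*} [Fintype S] [DecidableEq S] [Nonempty S]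
    (G : SimpleGraph S) (hG : G.IsTree)
    (c : S → S → ℝ) (hsym : ∀ x y, c x y = c y x) (hc0 : ∀ x y, 0 ≤ c x y)
    (hadj : ∀ x y, G.Adj x y ↔ c x y ≠ 0)
    (v : S) (A : Finset S) (hA : A.Nonempty)
    (h g : S → ℝ)
    (hhA : ∀ x ∈ A, h x = 0)
    (hhrec : ∀ x ∉ A, h x = 1 + ∑ y, (c x y / ∑ z, c x z) * h y)
    (hgv : g v = 0)
    (hgrec : ∀ x, x ≠ v → g x = 1 + ∑ y, (c x y / ∑ z, c x z) * g y) :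
    ∀ x, h x ≤ (⨆ z, g z) *
      (1 + 1 / ∑ x ∈ A, (∑ z, c x z) / (∑ w, ∑ z, c w z)) := by
  intro x
  rcases subsingleton_or_nontrivial S with hS | hS
  · -- one-point case: everything is zero
    obtain ⟨a, ha⟩ := hA
    have hx : h x = 0 := by rw [Subsingleton.elim x a]; exact hhA a ha
    have hg : ∀ z, g z = 0 := fun z => by rw [Subsingleton.elim z v]; exact hgv
    have hsup : (⨆ z, g z) = 0 := by simp only [hg, ciSup_const]
    rw [hx, hsup, zero_mul]
  · -- main case
    have hconn : G.Connected := hG.isConnected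
    have hadjpos : ∀ x y, G.Adj x y → 0 < c x y :=
      fun x y hxy => lt_of_le_of_ne (hc0 x y) (Ne.symm ((hadj x y).1 hxy))
    have hK : ∀ x, 0 < ∑ z, c x z := by
      intro x
      obtain ⟨y, hy⟩ := exists_ne x
      obtain ⟨p⟩ := hconn.preconnected x y
      cases p with
      | nil => exact absurd rfl hy
      | @cons _ z _ hxz _ =>
        exact Finset.sum_pos' (fun i _ => hc0 x i)
          ⟨z, Finset.mem_univ z, hadjpos x z hxz⟩
    have gle : ∀ z, g z ≤ ⨆ z, g z :=
      fun z => le_ciSup (Set.Finite.bddAbove (Set.finite_range g)) z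
    have hGnn : 0 ≤ ⨆ z, g z := hgv ▸ gle v
    -- h ≥ 0
    have hh0 : ∀ x, 0 ≤ h x := by
      refine claim_tree_hit_minprin G hconn c hc0 hadjpos hK A hA h
        (fun x hx => le_of_eq (hhA x hx).symm) ?_
      intro y hy
      have := hhrec y hy
      linarith
    -- g ≥ 0
    have hg0 : ∀ x, 0 ≤ g x := by
      refine claim_tree_hit_minprin G hconn c hc0 hadjpos hK
        {v} ⟨v, Finset.mem_singleton_self v⟩ g
        (fun y hy => by rw [Finset.mem_singleton.1 hy, hgv]) ?_
      intro y hy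
      have := hgrec y (Finset.notMem_singleton.1 hy)
      linarith
    -- comparison: h x ≤ g x + h v
    have hcomp : ∀ x, h x ≤ g x + h v := by
      have hmain := claim_tree_hit_minprin G hconn c hc0 hadjpos hK (A ∪ {v})
        ⟨v, Finset.mem_union_right A (Finset.mem_singleton_self v)⟩
        (fun x => g x + h v - h x) ?_ ?_
      · intro y; have : 0 ≤ g y + h v - h y := hmain y; linarith
      · intro y hy
        show (0:ℝ) ≤ g y + h v - h y
        rcases Finset.mem_union.1 hy with hy' | hy'
        · have h1 := hhA y hy'
          have h2 := hg0 y
          have h3 := hh0 v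
          linarith
        · rw [Finset.mem_singleton.1 hy', hgv]
          simp
      · intro y hy
        show ∑ w, (c y w / ∑ z, c y z) * (g w + h v - h w) ≤ g y + h v - h y
        have hyA : y ∉ A := fun hmem => hy (Finset.mem_union_left _ hmem)
        have hyv : y ≠ v := fun hmem =>
          hy (Finset.mem_union_right _ (by rw [hmem]; exact Finset.mem_singleton_self v))
        have rowsum : ∑ w, c y w / (∑ z, c y z) = 1 := by
          rw [← Finset.sum_div, div_self (hK y).ne']
        have e1 : ∑ w, (c y w / ∑ z, c y z) * (g w + h v - h w)
            = (∑ w, (c y w / ∑ z, c y z) * g w) + h v - ∑ w, (c y w / ∑ z, c y z) * h w := by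
          simp only [mul_add, mul_sub]
          rw [Finset.sum_sub_distrib, Finset.sum_add_distrib, ← Finset.sum_mul, rowsum, one_mul]
        rw [e1]
        have e2 := hgrec y hyv
        have e3 := hhrec y hyA
        linarith
    -- energy identity
    have L1 : ∀ f₁ f₂ : S → ℝ,
        ∑ a, (∑ z, c a z) * (f₁ a * ∑ y, (c a y / ∑ z, c a z) * f₂ y)
          = ∑ a, ∑ y, c a y * f₁ a * f₂ y := by
      intro f₁ f₂
      refine Finset.sum_congr rfl fun a _ => ?_
      rw [Finset.mul_sum, Finset.mul_sum]
      refine Finset.sum_congr rfl fun y _ => ?_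
      have := (hK a).ne'
      field_simp
    -- symmetry of the bilinear form
    have Tsym : ∑ a, (∑ z, c a z) * (g a * ∑ y, (c a y / ∑ z, c a z) * h y)
        = ∑ a, (∑ z, c a z) * (h a * ∑ y, (c a y / ∑ z, c a z) * g y) := by
      rw [L1, L1, Finset.sum_comm]
      refine Finset.sum_congr rfl fun a _ => Finset.sum_congr rfl fun b _ => ?_
      rw [hsym]
      ring
    -- column-sum identity
    have L2 : ∀ f : S → ℝ,
        ∑ a, (∑ z, c a z) * (∑ y, (c a y / ∑ z, c a z) * f y) = ∑ y, (∑ z, c y z) * f y := by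
      intro f
      have h1 := L1 (fun _ => 1) f
      simp only [one_mul, mul_one] at h1
      rw [h1, Finset.sum_comm]
      refine Finset.sum_congr rfl fun a _ => ?_
      rw [← Finset.sum_mul]
      congr 1
      exact Finset.sum_congr rfl fun b _ => hsym b a
    -- Kac identity for h over A
    have kacH : ∑ a ∈ A, (∑ z, c a z) * (∑ y, (c a y / ∑ z, c a z) * h y)
        = (∑ w, ∑ z, c w z) - ∑ a ∈ A, ∑ z, c a z := by
      have col := L2 h
      have splitPh : (∑ a ∈ A, (∑ z, c a z) * (∑ y, (c a y / ∑ z, c a z) * h y))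
          + ∑ a ∈ Aᶜ, (∑ z, c a z) * (∑ y, (c a y / ∑ z, c a z) * h y)
          = ∑ a, (∑ z, c a z) * (∑ y, (c a y / ∑ z, c a z) * h y) :=
        Finset.sum_add_sum_compl A _
      have hAc : ∑ a ∈ Aᶜ, (∑ z, c a z) * (∑ y, (c a y / ∑ z, c a z) * h y)
          = ∑ a ∈ Aᶜ, ((∑ z, c a z) * h a - (∑ z, c a z)) := by
        refine Finset.sum_congr rfl fun a ha => ?_
        have hr := hhrec a (Finset.mem_compl.mp ha)
        have : (∑ y, (c a y / ∑ z, c a z) * h y) = h a - 1 := by linarith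
        rw [this]; ring
      have e2 : ∑ a ∈ Aᶜ, ((∑ z, c a z) * h a - (∑ z, c a z))
          = (∑ a ∈ Aᶜ, (∑ z, c a z) * h a) - ∑ a ∈ Aᶜ, ∑ z, c a z :=
        Finset.sum_sub_distrib _ _
      have splitKh : (∑ a ∈ A, (∑ z, c a z) * h a) + ∑ a ∈ Aᶜ, (∑ z, c a z) * h a
          = ∑ a, (∑ z, c a z) * h a := Finset.sum_add_sum_compl A _
      have hAzero : ∑ a ∈ A, (∑ z, c a z) * h a = 0 :=
        Finset.sum_eq_zero fun a ha => by rw [hhA a ha, mul_zero]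
      have splitK : (∑ a ∈ A, ∑ z, c a z) + ∑ a ∈ Aᶜ, ∑ z, c a z
          = ∑ a, ∑ z, c a z := Finset.sum_add_sum_compl A _
      linarith
    -- value of P g at v
    have KvPgv : (∑ z, c v z) * (∑ y, (c v y / ∑ z, c v z) * g y)
        = (∑ w, ∑ z, c w z) - ∑ z, c v z := by
      have colg := L2 g
      have er1 : (∑ a ∈ Finset.univ.erase v, (∑ z, c a z) * (∑ y, (c a y / ∑ z, c a z) * g y))
          + (∑ z, c v z) * (∑ y, (c v y / ∑ z, c v z) * g y)
          = ∑ a, (∑ z, c a z) * (∑ y, (c a y / ∑ z, c a z) * g y) :=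
        Finset.sum_erase_add _ _ (Finset.mem_univ v)
      have er2 : ∑ a ∈ Finset.univ.erase v, (∑ z, c a z) * (∑ y, (c a y / ∑ z, c a z) * g y)
          = ∑ a ∈ Finset.univ.erase v, ((∑ z, c a z) * g a - (∑ z, c a z)) := by
        refine Finset.sum_congr rfl fun a ha => ?_
        have hr := hgrec a (Finset.ne_of_mem_erase ha)
        have : (∑ y, (c a y / ∑ z, c a z) * g y) = g a - 1 := by linarith
        rw [this]; ring
      have er3 : ∑ a ∈ Finset.univ.erase v, ((∑ z, c a z) * g a - (∑ z, c a z))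
          = (∑ a ∈ Finset.univ.erase v, (∑ z, c a z) * g a)
            - ∑ a ∈ Finset.univ.erase v, ∑ z, c a z :=
        Finset.sum_sub_distrib _ _
      have er4 : (∑ a ∈ Finset.univ.erase v, (∑ z, c a z) * g a) + (∑ z, c v z) * g v
          = ∑ a, (∑ z, c a z) * g a := Finset.sum_erase_add _ _ (Finset.mem_univ v)
      have er5 : (∑ a ∈ Finset.univ.erase v, ∑ z, c a z) + (∑ z, c v z)
          = ∑ a, ∑ z, c a z := Finset.sum_erase_add _ _ (Finset.mem_univ v)
      rw [hgv, mul_zero] at er4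
      linarith
    -- the star identity:
    -- ctot * h v = ∑_{Aᶜ} K (h - g) + ∑_A K g (P h)
    have star : (∑ w, ∑ z, c w z) * h v
        = (∑ a ∈ Aᶜ, ((∑ z, c a z) * h a - (∑ z, c a z) * g a))
          + ∑ a ∈ A, (∑ z, c a z) * (g a * ∑ y, (c a y / ∑ z, c a z) * h y) := by
      have t1 : (∑ a ∈ A, (∑ z, c a z) * (g a * ∑ y, (c a y / ∑ z, c a z) * h y))
          + ∑ a ∈ Aᶜ, (∑ z, c a z) * (g a * ∑ y, (c a y / ∑ z, c a z) * h y)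
          = ∑ a, (∑ z, c a z) * (g a * ∑ y, (c a y / ∑ z, c a z) * h y) :=
        Finset.sum_add_sum_compl A _
      have t2 : ∑ a ∈ Aᶜ, (∑ z, c a z) * (g a * ∑ y, (c a y / ∑ z, c a z) * h y)
          = ∑ a ∈ Aᶜ, ((∑ z, c a z) * (g a * h a) - (∑ z, c a z) * g a) := by
        refine Finset.sum_congr rfl fun a ha => ?_
        have hr := hhrec a (Finset.mem_compl.mp ha)
        have : (∑ y, (c a y / ∑ z, c a z) * h y) = h a - 1 := by linarith
        rw [this]; ring
      have t2' : ∑ a ∈ Aᶜ, ((∑ z, c a z) * (g a * h a) - (∑ z, c a z) * g a)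
          = (∑ a ∈ Aᶜ, (∑ z, c a z) * (g a * h a)) - ∑ a ∈ Aᶜ, (∑ z, c a z) * g a :=
        Finset.sum_sub_distrib _ _
      have t2'' : (∑ a ∈ A, (∑ z, c a z) * (g a * h a))
          + ∑ a ∈ Aᶜ, (∑ z, c a z) * (g a * h a)
          = ∑ a, (∑ z, c a z) * (g a * h a) := Finset.sum_add_sum_compl A _
      have t2''' : ∑ a ∈ A, (∑ z, c a z) * (g a * h a) = 0 :=
        Finset.sum_eq_zero fun a ha => by rw [hhA a ha, mul_zero, mul_zero]
      -- right-hand side of Tsym split at v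
      have t3 : (∑ a ∈ Finset.univ.erase v, (∑ z, c a z) * (h a * ∑ y, (c a y / ∑ z, c a z) * g y))
          + (∑ z, c v z) * (h v * ∑ y, (c v y / ∑ z, c v z) * g y)
          = ∑ a, (∑ z, c a z) * (h a * ∑ y, (c a y / ∑ z, c a z) * g y) :=
        Finset.sum_erase_add _ _ (Finset.mem_univ v)
      have t4 : ∑ a ∈ Finset.univ.erase v, (∑ z, c a z) * (h a * ∑ y, (c a y / ∑ z, c a z) * g y)
          = ∑ a ∈ Finset.univ.erase v, ((∑ z, c a z) * (h a * g a) - (∑ z, c a z) * h a) := by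
        refine Finset.sum_congr rfl fun a ha => ?_
        have hr := hgrec a (Finset.ne_of_mem_erase ha)
        have : (∑ y, (c a y / ∑ z, c a z) * g y) = g a - 1 := by linarith
        rw [this]; ring
      have t4' : ∑ a ∈ Finset.univ.erase v, ((∑ z, c a z) * (h a * g a) - (∑ z, c a z) * h a)
          = (∑ a ∈ Finset.univ.erase v, (∑ z, c a z) * (h a * g a))
            - ∑ a ∈ Finset.univ.erase v, (∑ z, c a z) * h a :=
        Finset.sum_sub_distrib _ _
      have t5 : (∑ a ∈ Finset.univ.erase v, (∑ z, c a z) * (h a * g a))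
          + (∑ z, c v z) * (h v * g v)
          = ∑ a, (∑ z, c a z) * (h a * g a) := Finset.sum_erase_add _ _ (Finset.mem_univ v)
      have t6 : (∑ a ∈ Finset.univ.erase v, (∑ z, c a z) * h a) + (∑ z, c v z) * h v
          = ∑ a, (∑ z, c a z) * h a := Finset.sum_erase_add _ _ (Finset.mem_univ v)
      have t7 : ∑ a, (∑ z, c a z) * (h a * g a) = ∑ a, (∑ z, c a z) * (g a * h a) :=
        Finset.sum_congr rfl fun a _ => by ring
      have t8 : (∑ a ∈ A, (∑ z, c a z) * h a) + ∑ a ∈ Aᶜ, (∑ z, c a z) * h a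
          = ∑ a, (∑ z, c a z) * h a := Finset.sum_add_sum_compl A _
      have t8' : ∑ a ∈ A, (∑ z, c a z) * h a = 0 :=
        Finset.sum_eq_zero fun a ha => by rw [hhA a ha, mul_zero]
      have t9 : (∑ z, c v z) * (h v * ∑ y, (c v y / ∑ z, c v z) * g y)
          = h v * ((∑ w, ∑ z, c w z) - ∑ z, c v z) := by
        rw [show (∑ z, c v z) * (h v * ∑ y, (c v y / ∑ z, c v z) * g y)
            = h v * ((∑ z, c v z) * (∑ y, (c v y / ∑ z, c v z) * g y)) by ring, KvPgv]
      rw [hgv, mul_zero, mul_zero] at t5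
      have hAcsub : ∑ a ∈ Aᶜ, ((∑ z, c a z) * h a - (∑ z, c a z) * g a)
          = (∑ a ∈ Aᶜ, (∑ z, c a z) * h a) - ∑ a ∈ Aᶜ, (∑ z, c a z) * g a :=
        Finset.sum_sub_distrib _ _
      have t10 : (∑ a ∈ A, (∑ z, c a z) * g a) + ∑ a ∈ Aᶜ, (∑ z, c a z) * g a
          = ∑ a, (∑ z, c a z) * g a := Finset.sum_add_sum_compl A _
      -- combine everything
      linarith [Tsym, t1, t2, t2', t2'', t2''', t3, t4, t4', t5, t6, t7, t8, t8', t9,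
        hAcsub, t10]
    -- bounds
    have cApos : 0 < ∑ a ∈ A, ∑ z, c a z := by
      obtain ⟨a, ha⟩ := hA
      exact Finset.sum_pos' (fun i _ => (hK i).le) ⟨a, ha, hK a⟩
    have splitK : (∑ a ∈ A, ∑ z, c a z) + ∑ a ∈ Aᶜ, ∑ z, c a z
        = ∑ a, ∑ z, c a z := Finset.sum_add_sum_compl A _
    have b1 : ∑ a ∈ Aᶜ, ((∑ z, c a z) * h a - (∑ z, c a z) * g a)
        ≤ ∑ a ∈ Aᶜ, (∑ z, c a z) * h v := by
      refine Finset.sum_le_sum fun a _ => ?_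
      have h1 := hcomp a
      nlinarith [(hK a).le]
    have b1' : ∑ a ∈ Aᶜ, (∑ z, c a z) * h v
        = ((∑ w, ∑ z, c w z) - ∑ a ∈ A, ∑ z, c a z) * h v := by
      rw [← Finset.sum_mul]
      congr 1
      linarith
    have Phnn : ∀ a, 0 ≤ ∑ y, (c a y / ∑ z, c a z) * h y := fun a =>
      Finset.sum_nonneg fun y _ => mul_nonneg (div_nonneg (hc0 a y) (hK a).le) (hh0 y)
    have b2 : ∑ a ∈ A, (∑ z, c a z) * (g a * ∑ y, (c a y / ∑ z, c a z) * h y)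
        ≤ (⨆ z, g z) * ((∑ w, ∑ z, c w z) - ∑ a ∈ A, ∑ z, c a z) := by
      have step1 : ∑ a ∈ A, (∑ z, c a z) * (g a * ∑ y, (c a y / ∑ z, c a z) * h y)
          ≤ ∑ a ∈ A, (⨆ z, g z) * ((∑ z, c a z) * (∑ y, (c a y / ∑ z, c a z) * h y)) := by
        refine Finset.sum_le_sum fun a _ => ?_
        nlinarith [gle a, Phnn a, (hK a).le,
          mul_nonneg (mul_nonneg (hK a).le (Phnn a)) (sub_nonneg.2 (gle a))]
      calc ∑ a ∈ A, (∑ z, c a z) * (g a * ∑ y, (c a y / ∑ z, c a z) * h y)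
          ≤ ∑ a ∈ A, (⨆ z, g z) * ((∑ z, c a z) * (∑ y, (c a y / ∑ z, c a z) * h y)) := step1
        _ = (⨆ z, g z) * ∑ a ∈ A, (∑ z, c a z) * (∑ y, (c a y / ∑ z, c a z) * h y) :=
            (Finset.mul_sum _ _ _).symm
        _ = (⨆ z, g z) * ((∑ w, ∑ z, c w z) - ∑ a ∈ A, ∑ z, c a z) := by rw [kacH]
    -- main inequality: cA * h v ≤ G * (ctot - cA)
    have main : (∑ a ∈ A, ∑ z, c a z) * h v
        ≤ (⨆ z, g z) * ((∑ w, ∑ z, c w z) - ∑ a ∈ A, ∑ z, c a z) := by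
      linarith [star, b1, b1', b2]
    -- conclusion
    have key : h x * (∑ a ∈ A, ∑ z, c a z) ≤ (⨆ z, g z) * (∑ w, ∑ z, c w z) := by
      have hx1 : h x ≤ (⨆ z, g z) + h v := le_trans (hcomp x) (by linarith [gle x])
      have hx2 : h x * (∑ a ∈ A, ∑ z, c a z) ≤ ((⨆ z, g z) + h v) * (∑ a ∈ A, ∑ z, c a z) :=
        mul_le_mul_of_nonneg_right hx1 cApos.le
      linarith [main]
    rw [← Finset.sum_div, one_div_div]
    have final1 : h x ≤ (⨆ z, g z) * (∑ w, ∑ z, c w z) / (∑ a ∈ A, ∑ z, c a z) :=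
      (le_div_iff₀ cApos).2 key
    have final2 : (⨆ z, g z) * (∑ w, ∑ z, c w z) / (∑ a ∈ A, ∑ z, c a z)
        = (⨆ z, g z) * ((∑ w, ∑ z, c w z) / (∑ a ∈ A, ∑ z, c a z)) := mul_div_assoc _ _ _
    have ctotnn : (0:ℝ) ≤ ∑ w, ∑ z, c w z := Finset.sum_nonneg fun w _ => (hK w).le
    linarith [final1, final2, hGnn, div_nonneg ctotnn cApos.le]
end

section
/- Expected hitting time on a weighted tree: let T be a finite tree with edge conductances c(u,v), let x, y be vertices and v_0 = x, v_1, …, v_n = y the unique path joining them. Writing T_x(z) for the union of {z} with the component of T − {z} containing x, and C_i = ∑_{w,z ∈ T_x(v_{i+1})} c(w,z), one has E_x[τ_y] = ∑_{i=0}^{n−1} ( C_i / c(v_i, v_{i+1}) − 1 ). -/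
open scoped BigOperators Classical

/-- In an acyclic graph, two vertices reachable from `x` avoiding `b`, both adjacent to `b`,
must coincide (unique neighbor of `b` in the component of `x`). -/
lemma tree_boundary_unique {S : Type*} {G : SimpleGraph S} (hG : G.IsAcyclic)
    {x b z1 z2 : S} (h1 : G.Adj z1 b) (h2 : G.Adj z2 b)
    (q1 : G.Walk x z1) (hq1 : b ∉ q1.support)
    (q2 : G.Walk x z2) (hq2 : b ∉ q2.support) : z1 = z2 := by
  classical
  have hr1 : b ∉ (q1.toPath : G.Walk x z1).support :=
    fun hb => hq1 (q1.support_toPath_subset hb)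
  have hr2 : b ∉ (q2.toPath : G.Walk x z2).support :=
    fun hb => hq2 (q2.support_toPath_subset hb)
  set r1 : G.Walk x z1 := (q1.toPath : G.Walk x z1) with hr1def
  set r2 : G.Walk x z2 := (q2.toPath : G.Walk x z2) with hr2def
  have hp1 : (r1.concat h1).IsPath := by
    rw [← SimpleGraph.Walk.isPath_reverse_iff, SimpleGraph.Walk.reverse_concat]
    refine SimpleGraph.Walk.IsPath.cons ?_ ?_
    · exact q1.toPath.2.reverse
    · rw [SimpleGraph.Walk.support_reverse, List.mem_reverse]; exact hr1
  have hp2 : (r2.concat h2).IsPath := by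
    rw [← SimpleGraph.Walk.isPath_reverse_iff, SimpleGraph.Walk.reverse_concat]
    refine SimpleGraph.Walk.IsPath.cons ?_ ?_
    · exact q2.toPath.2.reverse
    · rw [SimpleGraph.Walk.support_reverse, List.mem_reverse]; exact hr2
  have heq : r1.concat h1 = r2.concat h2 := by
    have := hG.path_unique (⟨r1.concat h1, hp1⟩ : G.Path x b) ⟨r2.concat h2, hp2⟩
    exact congrArg Subtype.val this
  obtain ⟨hv, -⟩ := SimpleGraph.Walk.concat_inj heq
  exact hv

/-- A path has, for each `i < length`, an initial segment reaching `getVert i`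
and avoiding `getVert (i+1)`. -/
lemma path_prefix_avoid {S : Type*} {G : SimpleGraph S} {x y : S}
    (p : G.Walk x y) (hp : p.IsPath) :
    ∀ i < p.length, ∃ q : G.Walk x (p.getVert i), p.getVert (i + 1) ∉ q.support := by
  induction p with
  | nil => intro i hi; simp at hi
  | @cons x v y h q ih =>
    intro i hi
    rw [SimpleGraph.Walk.cons_isPath_iff] at hp
    obtain ⟨hq, hxs⟩ := hp
    cases i with
    | zero =>
      refine ⟨(SimpleGraph.Walk.nil : G.Walk x x).copy rfl ?_, ?_⟩
      · simp [SimpleGraph.Walk.getVert_zero]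
      · rw [SimpleGraph.Walk.support_copy]
        simp only [SimpleGraph.Walk.getVert_cons_succ, SimpleGraph.Walk.support_nil,
          List.mem_singleton, SimpleGraph.Walk.getVert_zero]
        exact fun hc => h.ne' hc
    | succ i =>
      have hi' : i < q.length := by
        simpa [SimpleGraph.Walk.length_cons, Nat.succ_lt_succ_iff] using hi
      obtain ⟨r, hr⟩ := ih hq i hi'
      refine ⟨(SimpleGraph.Walk.cons h r).copy rfl ?_, ?_⟩
      · rw [SimpleGraph.Walk.getVert_cons_succ]
      · rw [SimpleGraph.Walk.support_copy]
        simp only [SimpleGraph.Walk.getVert_cons_succ, SimpleGraph.Walk.support_cons,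
          List.mem_cons]
        rintro (hc | hc)
        · exact hxs (SimpleGraph.Walk.mem_support_iff_exists_getVert.mpr
            ⟨i + 1, hc, by omega⟩)
        · exact hr hc

/-- Key per-edge computation: the difference of expected hitting times across an edge
`(a,b)` separating `x` from `y` equals `C / c a b - 1`. -/
lemma tree_edge_formula {S : Type*} [Fintype S] [DecidableEq S]
    (G : SimpleGraph S) (hG : G.IsTree)
    (c : S → S → ℝ) (hsym : ∀ x y, c x y = c y x) (hc0 : ∀ x y, 0 ≤ c x y)
    (hadj : ∀ x y, G.Adj x y ↔ c x y ≠ 0)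
    (x y a b : S) (hab : G.Adj a b)
    (ha : ∃ q : G.Walk x a, b ∉ q.support)
    (hy : ∀ q : G.Walk x y, b ∈ q.support)
    (h : S → ℝ)
    (hrec : ∀ z, z ≠ y → h z = 1 + ∑ w, (c z w / ∑ u, c z u) * h w) :
    h a - h b = (∑ w, ∑ z,
        if ((w = b ∨ ∃ q : G.Walk x w, b ∉ q.support)
          ∧ (z = b ∨ ∃ q : G.Walk x z, b ∉ q.support))
        then c w z else 0) / c a b - 1 := by
  classical
  set A : Finset S := Finset.univ.filter (fun w => ∃ q : G.Walk x w, b ∉ q.support) with hA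
  have memA : ∀ w, w ∈ A ↔ ∃ q : G.Walk x w, b ∉ q.support := by
    intro w; simp [hA]
  have hbA : b ∉ A := by
    rw [memA]; rintro ⟨q, hq⟩; exact hq q.end_mem_support
  have haA : a ∈ A := (memA a).mpr ha
  have hyA : y ∉ A := by
    rw [memA]; rintro ⟨q, hq⟩; exact hq (hy q)
  have hclose : ∀ z ∈ A, ∀ w, c z w ≠ 0 → w ≠ b → w ∈ A := by
    intro z hz w hcw hwb
    obtain ⟨q, hq⟩ := (memA z).mp hz
    refine (memA w).mpr ⟨q.concat ((hadj z w).mpr hcw), ?_⟩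
    rw [SimpleGraph.Walk.support_concat, List.mem_append]
    rintro (hb | hb)
    · exact hq hb
    · exact hwb (List.mem_singleton.mp hb).symm
  have hbd : ∀ z ∈ A, G.Adj z b → z = a := by
    intro z hz hzb
    obtain ⟨q, hq⟩ := (memA z).mp hz
    obtain ⟨qa, hqa⟩ := ha
    exact tree_boundary_unique hG.IsAcyclic hzb hab q hq qa hqa
  have hcab : c a b ≠ 0 := (hadj a b).mp hab
  -- every vertex in A has positive total conductance
  have hDpos : ∀ z ∈ A, 0 < ∑ u, c z u := by
    intro z hz
    have hzb : z ≠ b := fun hzb' => hbA (hzb' ▸ hz)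
    obtain ⟨q⟩ := hG.isConnected.preconnected z b
    have hnil : ¬ q.Nil := SimpleGraph.Walk.not_nil_of_ne hzb
    have hadj1 : G.Adj z (q.getVert 1) := q.adj_snd hnil
    have hpos : 0 < c z (q.getVert 1) :=
      lt_of_le_of_ne (hc0 _ _) (Ne.symm ((hadj _ _).mp hadj1))
    calc (0:ℝ) < c z (q.getVert 1) := hpos
      _ ≤ ∑ u, c z u :=
        Finset.single_le_sum (fun i _ => hc0 z i) (Finset.mem_univ _)
  -- the flow equations
  have hEq : ∀ z ∈ A, ∑ w, c z w * (h z - h w) = ∑ w, c z w := by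
    intro z hz
    have hzy : z ≠ y := fun hzy' => hyA (hzy' ▸ hz)
    have hD := hDpos z hz
    have hr := hrec z hzy
    have hsumdiv : ∑ w, (c z w / ∑ u, c z u) * h w
        = (∑ w, c z w * h w) / ∑ u, c z u := by
      rw [Finset.sum_div]; exact Finset.sum_congr rfl (fun w _ => by ring)
    rw [hsumdiv] at hr
    have hD' : (∑ u, c z u) ≠ 0 := ne_of_gt hD
    have h2 : (∑ u, c z u) * h z = (∑ u, c z u) + ∑ w, c z w * h w := by
      field_simp at hr
      linarith [hr]
    have h3 : ∑ w, c z w * (h z - h w)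
        = (∑ w, c z w) * h z - ∑ w, c z w * h w := by
      rw [Finset.sum_mul, ← Finset.sum_sub_distrib]
      exact Finset.sum_congr rfl (fun w _ => by ring)
    rw [h3]; linarith [h2]
  -- compute the boundary sums
  have hbsum1 : ∀ (f : S → S → ℝ), (∀ z w, c z w = 0 → f z w = 0) →
      ∀ z ∈ A, ∑ w ∈ Aᶜ, f z w = f z b := by
    intro f hf z hz
    refine Finset.sum_eq_single_of_mem b (Finset.mem_compl.mpr hbA) ?_
    intro w hw hwb
    by_cases hcw : c z w = 0
    · exact hf z w hcw
    · exact absurd (hclose z hz w hcw hwb) (Finset.mem_compl.mp hw)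
  have hbsum2 : ∀ (f : S → S → ℝ), (∀ z w, c z w = 0 → f z w = 0) →
      ∑ z ∈ A, f z b = f a b := by
    intro f hf
    refine Finset.sum_eq_single_of_mem a haA ?_
    intro z hz hza
    by_cases hcz : c z b = 0
    · exact hf z b hcz
    · exact absurd (hbd z hz ((hadj z b).mpr hcz)) hza
  -- the main flow identity
  set Q : ℝ := ∑ z ∈ A, ∑ w ∈ A, c z w with hQ
  have flow : c a b * (h a - h b) = Q + c a b := by
    have hfF : ∀ z w, c z w = 0 → c z w * (h z - h w) = 0 := by
      intro z w hc; rw [hc]; ring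
    have hfc : ∀ z w, c z w = 0 → c z w = 0 := fun _ _ hc => hc
    have hL : ∑ z ∈ A, ∑ w, c z w * (h z - h w) = c a b * (h a - h b) := by
      have e1 : ∑ z ∈ A, ∑ w, c z w * (h z - h w)
          = (∑ z ∈ A, ∑ w ∈ A, c z w * (h z - h w))
            + ∑ z ∈ A, ∑ w ∈ Aᶜ, c z w * (h z - h w) := by
        rw [← Finset.sum_add_distrib]
        exact Finset.sum_congr rfl (fun z _ =>
          (Finset.sum_add_sum_compl A (fun w => c z w * (h z - h w))).symm)
      have e2 : ∑ z ∈ A, ∑ w ∈ A, c z w * (h z - h w) = 0 := by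
        have hswap : ∑ z ∈ A, ∑ w ∈ A, c z w * (h z - h w)
            = - ∑ z ∈ A, ∑ w ∈ A, c z w * (h z - h w) := by
          conv_lhs => rw [Finset.sum_comm]
          rw [← Finset.sum_neg_distrib]
          refine Finset.sum_congr rfl (fun z _ => ?_)
          rw [← Finset.sum_neg_distrib]
          refine Finset.sum_congr rfl (fun w _ => ?_)
          rw [hsym w z]; ring
        linarith [hswap]
      have e3 : ∑ z ∈ A, ∑ w ∈ Aᶜ, c z w * (h z - h w)
          = c a b * (h a - h b) :=
        calc ∑ z ∈ A, ∑ w ∈ Aᶜ, c z w * (h z - h w)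
            = ∑ z ∈ A, c z b * (h z - h b) :=
              Finset.sum_congr rfl (fun z hz =>
                hbsum1 (fun z w => c z w * (h z - h w)) hfF z hz)
          _ = c a b * (h a - h b) :=
              hbsum2 (fun z w => c z w * (h z - h w)) hfF
      rw [e1, e2, e3]; ring
    have hR : ∑ z ∈ A, ∑ w, c z w = Q + c a b := by
      have e1 : ∑ z ∈ A, ∑ w, c z w
          = Q + ∑ z ∈ A, ∑ w ∈ Aᶜ, c z w := by
        rw [hQ, ← Finset.sum_add_distrib]
        exact Finset.sum_congr rfl (fun z _ =>
          (Finset.sum_add_sum_compl A (fun w => c z w)).symm)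
      have e3 : ∑ z ∈ A, ∑ w ∈ Aᶜ, c z w = c a b :=
        calc ∑ z ∈ A, ∑ w ∈ Aᶜ, c z w
            = ∑ z ∈ A, c z b :=
              Finset.sum_congr rfl (fun z hz => hbsum1 (fun z w => c z w) hfc z hz)
          _ = c a b := hbsum2 (fun z w => c z w) hfc
      rw [e1, e3]
    rw [← hL, ← hR]
    exact Finset.sum_congr rfl hEq
  -- compute the constant C
  have hCB : (∑ w, ∑ z,
      if ((w = b ∨ ∃ q : G.Walk x w, b ∉ q.support)
        ∧ (z = b ∨ ∃ q : G.Walk x z, b ∉ q.support))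
      then c w z else 0) = ∑ w ∈ insert b A, ∑ z ∈ insert b A, c w z := by
    have hfil : Finset.univ.filter
        (fun u => u = b ∨ ∃ q : G.Walk x u, b ∉ q.support) = insert b A := by
      ext u
      simp [hA, Finset.mem_insert]
    have step : ∀ w : S, (∑ z, if ((w = b ∨ ∃ q : G.Walk x w, b ∉ q.support)
          ∧ (z = b ∨ ∃ q : G.Walk x z, b ∉ q.support)) then c w z else 0)
        = if (w = b ∨ ∃ q : G.Walk x w, b ∉ q.support)
          then ∑ z ∈ insert b A, c w z else 0 := by
      intro w
      by_cases hw : (w = b ∨ ∃ q : G.Walk x w, b ∉ q.support)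
      · rw [if_pos hw, ← hfil, Finset.sum_filter]
        refine Finset.sum_congr rfl (fun z _ => ?_)
        by_cases hz : (z = b ∨ ∃ q : G.Walk x z, b ∉ q.support)
        · rw [if_pos (⟨hw, hz⟩ : _ ∧ _), if_pos hz]
        · rw [if_neg (fun hc => hz (And.right hc)), if_neg hz]
      · rw [if_neg hw]
        exact Finset.sum_eq_zero (fun z _ => if_neg (fun hc => hw (And.left hc)))
    rw [Finset.sum_congr rfl (fun w _ => step w), ← hfil, Finset.sum_filter]
  have hcbb : c b b = 0 := by
    by_contra hcbb
    exact G.irrefl ((hadj b b).mpr hcbb)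
  have hca : ∑ z ∈ A, c b z = c a b := by
    have hfr : ∀ z w, c z w = 0 → c w z = 0 := by
      intro z w hc; rw [hsym w z]; exact hc
    have h1 : ∑ z ∈ A, c b z = c b a := hbsum2 (fun z w => c w z) hfr
    rw [h1, hsym b a]
  have hcb : ∑ w ∈ A, c w b = c a b := hbsum2 (fun z w => c z w) (fun _ _ hc => hc)
  have hCval : (∑ w, ∑ z,
      if ((w = b ∨ ∃ q : G.Walk x w, b ∉ q.support)
        ∧ (z = b ∨ ∃ q : G.Walk x z, b ∉ q.support))
      then c w z else 0) = Q + 2 * c a b := by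
    rw [hCB, Finset.sum_insert hbA]
    have e1 : ∑ z ∈ insert b A, c b z = c a b := by
      rw [Finset.sum_insert hbA, hcbb, hca]; ring
    have e2 : ∑ w ∈ A, ∑ z ∈ insert b A, c w z = Q + c a b := by
      have : ∀ w ∈ A, ∑ z ∈ insert b A, c w z = c w b + ∑ z ∈ A, c w z := by
        intro w _; rw [Finset.sum_insert hbA]
      rw [Finset.sum_congr rfl this, Finset.sum_add_distrib, hcb, hQ]
      ring
    rw [e1, e2]; ring
  rw [hCval]
  field_simp
  linarith [flow]

/-- expected hitting time on a weighted tree: let `T` be a finite tree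
with positive edge conductances `c`, `x, y` vertices, and `v_0 = x, …, v_n = y` the
unique path joining them (`v_i = p.getVert i` for the path `p`).  With
`T_x(v_{i+1})` the union of `{v_{i+1}}` and the component of `T − {v_{i+1}}`
containing `x`, and `C_i = ∑_{w,z ∈ T_x(v_{i+1})} c(w,z)`, the expected hitting time
satisfies `E_x[τ_y] = ∑_{i<n} (C_i / c(v_i, v_{i+1}) − 1)`.  The expected hitting
times `h z = E_z[τ_y]` are characterized by the usual hitting-time equations. -/
theorem claim_tree_formula {S : Type*} [Fintype S] [DecidableEq S] [Nonempty S]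
    (G : SimpleGraph S) (hG : G.IsTree)
    (c : S → S → ℝ) (hsym : ∀ x y, c x y = c y x) (hc0 : ∀ x y, 0 ≤ c x y)
    (hadj : ∀ x y, G.Adj x y ↔ c x y ≠ 0)
    (x y : S) (p : G.Walk x y) (hp : p.IsPath)
    (h : S → ℝ)
    (hhy : h y = 0)
    (hrec : ∀ z, z ≠ y → h z = 1 + ∑ w, (c z w / ∑ u, c z u) * h w) :
    h x = ∑ i ∈ Finset.range p.length,
      ((∑ w, ∑ z,
          if ((w = p.getVert (i + 1) ∨ ∃ q : G.Walk x w, p.getVert (i + 1) ∉ q.support)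
            ∧ (z = p.getVert (i + 1) ∨ ∃ q : G.Walk x z, p.getVert (i + 1) ∉ q.support))
          then c w z else 0)
        / c (p.getVert i) (p.getVert (i + 1)) - 1) := by
  classical
  have tel : ∑ i ∈ Finset.range p.length,
      (h (p.getVert i) - h (p.getVert (i + 1))) = h x := by
    rw [Finset.sum_range_sub' (fun i => h (p.getVert i))]
    rw [SimpleGraph.Walk.getVert_zero, SimpleGraph.Walk.getVert_length, hhy]
    ring
  rw [← tel]
  refine Finset.sum_congr rfl (fun i hi => ?_)
  rw [Finset.mem_range] at hi
  have hab : G.Adj (p.getVert i) (p.getVert (i + 1)) := p.adj_getVert_succ hi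
  have ha : ∃ q : G.Walk x (p.getVert i), p.getVert (i + 1) ∉ q.support :=
    path_prefix_avoid p hp i hi
  have hy : ∀ q : G.Walk x y, p.getVert (i + 1) ∈ q.support := by
    intro q
    have hmem : p.getVert (i + 1) ∈ p.support :=
      SimpleGraph.Walk.mem_support_iff_exists_getVert.mpr ⟨i + 1, rfl, by omega⟩
    have hpq : (⟨p, hp⟩ : G.Path x y) = q.toPath :=
      hG.IsAcyclic.path_unique ⟨p, hp⟩ q.toPath
    have hpq' : p = (q.toPath : G.Walk x y) := congrArg Subtype.val hpq
    exact q.support_toPath_subset (hpq' ▸ hmem)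
  exact tree_edge_formula G hG c hsym hc0 hadj x y (p.getVert i) (p.getVert (i + 1))
    hab ha hy h hrec
end
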